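/- Let x₁ ≥ x₂ ≥ x₃ ≥ 0 with x₁ + x₂ + x₃ = 1 and x₁² + x₂² + x₃² = γ for a fixed γ ∈ [1/3, 1]. Then the maximum of H(x) = -∑ᵢ xᵢ log xᵢ over such triples is attained when x₂ = x₃, i.e., at x₁ = 1/3 + √((2/3)(γ - 1/3)), x₂ = x₃ = (1 - x₁)/2. -/

import Mathlib

/-- Shannon entropy of a triple, with `0 * log 0 = 0` (automatic since `Real.log 0 = 0`). -/
noncomputable def H3 (x₁ x₂ x₃ : ℝ) : ℝ :=
  -(x₁ * Real.log x₁) - x₂ * Real.log x₂ - x₃ * Real.log x₃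

/-- Discriminant-type quadratic: `(x₂ - x₃)^2` along the constraint curve, as a function of `x₁`. -/
noncomputable def Dq (γ p : ℝ) : ℝ := 2*γ - 1 + 2*p - 3*p^2

/-- Middle coordinate along the constraint curve. -/
noncomputable def qf (γ p : ℝ) : ℝ := (1 - p + Real.sqrt (Dq γ p)) / 2

/-- Smallest coordinate along the constraint curve. -/
noncomputable def rf (γ p : ℝ) : ℝ := (1 - p - Real.sqrt (Dq γ p)) / 2

/-- Entropy along the constraint curve. -/
noncomputable def Ff (γ p : ℝ) : ℝ := H3 p (qf γ p) (rf γ p)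

lemma hasDerivAt_Dq (γ p : ℝ) : HasDerivAt (Dq γ) (2 - 6*p) p := by
  have h := (((hasDerivAt_id p).const_mul (2:ℝ)).const_add (2*γ-1)).sub
    ((hasDerivAt_pow 2 p).const_mul 3)
  have e : Dq γ = fun y : ℝ => 2*γ - 1 + 2*y - 3*y^2 := rfl
  rw [e]
  refine h.congr_deriv ?_
  push_cast
  ring

lemma continuous_sqrtDq (γ : ℝ) : Continuous (fun p => Real.sqrt (Dq γ p)) := by
  apply Real.continuous_sqrt.comp
  unfold Dq; fun_prop

lemma continuous_qf (γ : ℝ) : Continuous (qf γ) := by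
  unfold qf
  exact (((continuous_const.sub continuous_id).add (continuous_sqrtDq γ)).div_const 2)

lemma continuous_rf (γ : ℝ) : Continuous (rf γ) := by
  unfold rf
  exact (((continuous_const.sub continuous_id).sub (continuous_sqrtDq γ)).div_const 2)

lemma continuous_Ff (γ : ℝ) : Continuous (Ff γ) := by
  unfold Ff H3
  exact ((Real.continuous_mul_log.neg).sub
      (Real.continuous_mul_log.comp (continuous_qf γ))).sub
    (Real.continuous_mul_log.comp (continuous_rf γ))

lemma hasDerivAt_sqrtDq (γ p : ℝ) (h : Dq γ p ≠ 0) :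
    HasDerivAt (fun y => Real.sqrt (Dq γ y)) (1/(2*Real.sqrt (Dq γ p)) * (2-6*p)) p := by
  have := (Real.hasDerivAt_sqrt h).comp p (hasDerivAt_Dq γ p)
  simpa [Function.comp_def] using this

lemma hasDerivAt_qf (γ p : ℝ) (h : Dq γ p ≠ 0) :
    HasDerivAt (qf γ) ((-1 + 1/(2*Real.sqrt (Dq γ p)) * (2-6*p))/2) p := by
  have h1 := (((hasDerivAt_const p (1:ℝ)).sub (hasDerivAt_id p)).add
    (hasDerivAt_sqrtDq γ p h)).div_const 2
  have e : qf γ = fun y => ((1:ℝ) - y + Real.sqrt (Dq γ y)) / 2 := rfl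
  rw [e]
  refine h1.congr_deriv ?_
  ring

lemma hasDerivAt_rf (γ p : ℝ) (h : Dq γ p ≠ 0) :
    HasDerivAt (rf γ) ((-1 - 1/(2*Real.sqrt (Dq γ p)) * (2-6*p))/2) p := by
  have h1 := (((hasDerivAt_const p (1:ℝ)).sub (hasDerivAt_id p)).sub
    (hasDerivAt_sqrtDq γ p h)).div_const 2
  have e : rf γ = fun y => ((1:ℝ) - y - Real.sqrt (Dq γ y)) / 2 := rfl
  rw [e]
  refine h1.congr_deriv ?_
  ring

lemma hasDerivAt_Ff (γ p : ℝ) (hD : Dq γ p ≠ 0) (hp : p ≠ 0) (hq : qf γ p ≠ 0)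
    (hr : rf γ p ≠ 0) :
    HasDerivAt (Ff γ)
      (-(Real.log p + 1)
        - (Real.log (qf γ p) + 1) * ((-1 + 1/(2*Real.sqrt (Dq γ p)) * (2-6*p))/2)
        - (Real.log (rf γ p) + 1) * ((-1 - 1/(2*Real.sqrt (Dq γ p)) * (2-6*p))/2)) p := by
  have h1 := (Real.hasDerivAt_mul_log hp).neg
  have h2 := (Real.hasDerivAt_mul_log hq).comp p (hasDerivAt_qf γ p hD)
  have h3 := (Real.hasDerivAt_mul_log hr).comp p (hasDerivAt_rf γ p hD)
  have h := (h1.sub h2).sub h3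
  have e : Ff γ = fun y => -(y * Real.log y) - qf γ y * Real.log (qf γ y)
      - rf γ y * Real.log (rf γ y) := rfl
  rw [e]
  exact h.congr_deriv (by ring)

/-- Key log inequality: for `0 < r < q ≤ p`,
`(q-r)(log p - log q) ≤ (p-q)(log q - log r)`. -/
lemma log_key {p q r : ℝ} (hr : 0 < r) (hrq : r < q) (hqp : q ≤ p) :
    (q - r) * (Real.log p - Real.log q) ≤ (p - q) * (Real.log q - Real.log r) := by
  have hq : 0 < q := hr.trans hrq
  have hp : 0 < p := lt_of_lt_of_le hq hqp
  have h1 : Real.log p - Real.log q ≤ (p - q) / q := by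
    have h := Real.log_le_sub_one_of_pos (div_pos hp hq)
    rw [Real.log_div hp.ne' hq.ne'] at h
    have e : p / q - 1 = (p - q) / q := by field_simp
    rw [e] at h
    linarith
  have h2 : (q - r) / q ≤ Real.log q - Real.log r := by
    have h := Real.log_le_sub_one_of_pos (div_pos hr hq)
    rw [Real.log_div hr.ne' hq.ne'] at h
    have e : r / q - 1 = -((q - r) / q) := by field_simp; ring
    rw [e] at h
    linarith
  calc (q - r) * (Real.log p - Real.log q) ≤ (q - r) * ((p - q)/q) :=
        mul_le_mul_of_nonneg_left h1 (by linarith)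
    _ = (p - q) * ((q - r)/q) := by ring
    _ ≤ (p - q) * (Real.log q - Real.log r) :=
        mul_le_mul_of_nonneg_left h2 (by linarith)

set_option maxHeartbeats 1000000 in
/-- Monotonicity of entropy along the constraint curve. -/
lemma Ff_mono (γ x₁ s : ℝ) (hx13 : 1/3 ≤ x₁) (hs2 : s ^ 2 = 2/3*(γ-1/3))
    (hlt : x₁ < 1/3 + s) (hDx₁0 : 0 ≤ Dq γ x₁)
    (h3 : Real.sqrt (Dq γ x₁) ≤ 3*x₁ - 1) (hr0 : 0 ≤ rf γ x₁) :
    Ff γ x₁ ≤ Ff γ (1/3 + s) := by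
  have hspos : 0 < s := by linarith
  set a := 1/3 + s with hadef
  have hx1a : x₁ ≤ a := hlt.le
  have hDpos : ∀ p ∈ Set.Ioo x₁ a, 0 < Dq γ p := by
    intro p hp
    obtain ⟨hp1, hp2⟩ := hp
    rw [hadef] at hp2
    unfold Dq
    nlinarith [mul_pos (show (0:ℝ) < 1/3 + s - p by linarith)
      (show (0:ℝ) < s + p - 1/3 by linarith), hs2]
  have hDval : (Real.sqrt (Dq γ x₁))^2 = Dq γ x₁ := Real.sq_sqrt hDx₁0
  have hsq0 : 0 ≤ Real.sqrt (Dq γ x₁) := Real.sqrt_nonneg _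
  have hDle : Dq γ x₁ ≤ (3*x₁-1)^2 := by nlinarith [hDval, h3, hsq0]
  have halpha : ∀ p ∈ Set.Ioo x₁ a, Real.sqrt (Dq γ p) < 3*p - 1 := by
    intro p hp
    obtain ⟨hp1, hp2⟩ := hp
    have hD := hDpos p ⟨hp1, hp2⟩
    have hm2 : Real.sqrt (Dq γ p)^2 = Dq γ p := Real.sq_sqrt hD.le
    have hmn : 0 ≤ Real.sqrt (Dq γ p) := Real.sqrt_nonneg _
    have hq2 : Dq γ p < (3*p-1)^2 := by
      have e1 : Dq γ x₁ = 2*γ - 1 + 2*x₁ - 3*x₁^2 := rfl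
      have e2 : Dq γ p = 2*γ - 1 + 2*p - 3*p^2 := rfl
      rw [e2]
      rw [e1] at hDle
      nlinarith [hDle, mul_pos (show (0:ℝ) < p - x₁ by linarith)
        (show (0:ℝ) < 6*(p+x₁) - 4 by linarith)]
    nlinarith [hm2, hmn, hq2]
  have hmono_r : StrictMonoOn (rf γ) (Set.Icc x₁ a) := by
    apply strictMonoOn_of_deriv_pos (convex_Icc _ _) (continuous_rf γ).continuousOn
    rw [interior_Icc]
    intro p hp
    have hD := hDpos p hp
    have hmpos : 0 < Real.sqrt (Dq γ p) := Real.sqrt_pos.mpr hD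
    rw [(hasDerivAt_rf γ p hD.ne').deriv]
    have hkey := halpha p hp
    have e : (-1 - 1/(2*Real.sqrt (Dq γ p)) * (2-6*p))/2
        = (3*p - 1 - Real.sqrt (Dq γ p))/(2*Real.sqrt (Dq γ p)) := by
      field_simp; ring
    rw [e]
    exact div_pos (by linarith) (by linarith)
  have hRpos : ∀ p ∈ Set.Ioo x₁ a, 0 < rf γ p := by
    intro p hp
    have h := hmono_r (Set.left_mem_Icc.mpr hx1a)
      (Set.mem_Icc.mpr ⟨hp.1.le, hp.2.le⟩) hp.1
    linarith
  have hQgtR : ∀ p ∈ Set.Ioo x₁ a, rf γ p < qf γ p := by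
    intro p hp
    have hmpos : 0 < Real.sqrt (Dq γ p) := Real.sqrt_pos.mpr (hDpos p hp)
    unfold qf rf
    linarith
  have hmono_F : MonotoneOn (Ff γ) (Set.Icc x₁ a) := by
    apply monotoneOn_of_deriv_nonneg (convex_Icc _ _) (continuous_Ff γ).continuousOn
    · rw [interior_Icc]
      intro p hp
      have hD := hDpos p hp
      have hR := hRpos p hp
      have hQ := hQgtR p hp
      have hp0 : (0:ℝ) < p := by have := hp.1; linarith
      exact ((hasDerivAt_Ff γ p hD.ne' hp0.ne' (by linarith)
        hR.ne').differentiableAt).differentiableWithinAt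
    · rw [interior_Icc]
      intro p hp
      have hD := hDpos p hp
      have hR := hRpos p hp
      have hQ := hQgtR p hp
      have hp0 : (0:ℝ) < p := by have := hp.1; linarith
      have hQ0 : 0 < qf γ p := by linarith
      rw [(hasDerivAt_Ff γ p hD.ne' hp0.ne' hQ0.ne' hR.ne').deriv]
      set m := Real.sqrt (Dq γ p) with hmdef
      have hmpos : 0 < m := Real.sqrt_pos.mpr hD
      have hQdef : qf γ p = (1 - p + m)/2 := rfl
      have hRdef : rf γ p = (1 - p - m)/2 := rfl
      have hkey3 : m < 3*p - 1 := halpha p hp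
      have hpQ : qf γ p ≤ p := by rw [hQdef]; linarith
      have hlk := log_key hR hQ hpQ
      set L1 := Real.log p with hL1
      set L2 := Real.log (qf γ p) with hL2
      set L3 := Real.log (rf γ p) with hL3
      set E := -(L1 + 1) - (L2 + 1) * ((-1 + 1/(2*m) * (2-6*p))/2)
        - (L3 + 1) * ((-1 - 1/(2*m) * (2-6*p))/2) with hEdef
      have hmE : m * E = (p - qf γ p) * (L2 - L3) - (qf γ p - rf γ p) * (L1 - L2) := by
        rw [hEdef, hQdef, hRdef]
        field_simp
        ring
      have h1 : 0 ≤ m * E := by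
        rw [hmE]
        nlinarith [hlk]
      by_contra hneg
      push_neg at hneg
      nlinarith [h1, mul_pos hmpos (neg_pos.mpr hneg)]
  have := hmono_F (Set.left_mem_Icc.mpr hx1a) (Set.right_mem_Icc.mpr hx1a) hx1a
  exact this

set_option maxHeartbeats 6000000 in
/-- For decreasing triples of nonnegative reals with sum 1 and sum of squares γ ∈ [1/3, 1],
the Shannon entropy is maximized at `x₁ = 1/3 + √((2/3)(γ-1/3))`, `x₂ = x₃ = (1-x₁)/2`. -/
theorem entropy_max_triple (γ : ℝ) (hγ₁ : 1 / 3 ≤ γ) (hγ₂ : γ ≤ 1) :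
    let a : ℝ := 1 / 3 + Real.sqrt (2 / 3 * (γ - 1 / 3))
    (a ≥ (1 - a) / 2 ∧ (1 - a) / 2 ≥ 0 ∧ a + (1 - a) / 2 + (1 - a) / 2 = 1 ∧
      a ^ 2 + ((1 - a) / 2) ^ 2 + ((1 - a) / 2) ^ 2 = γ) ∧
    ∀ x₁ x₂ x₃ : ℝ, x₁ ≥ x₂ → x₂ ≥ x₃ → x₃ ≥ 0 →
      x₁ + x₂ + x₃ = 1 → x₁ ^ 2 + x₂ ^ 2 + x₃ ^ 2 = γ →
      H3 x₁ x₂ x₃ ≤ H3 a ((1 - a) / 2) ((1 - a) / 2) := by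
  intro a
  have ha : a = 1/3 + Real.sqrt (2/3*(γ-1/3)) := rfl
  clear_value a
  set s := Real.sqrt (2/3*(γ-1/3)) with hsdef
  have hs0 : 0 ≤ s := Real.sqrt_nonneg _
  have hs2 : s ^ 2 = 2/3*(γ-1/3) := by rw [hsdef]; exact Real.sq_sqrt (by linarith)
  clear_value s
  have hsle : s ≤ 2/3 := by nlinarith
  have ha1 : a ≤ 1 := by rw [ha]; linarith
  have hab : a ≥ (1-a)/2 := by rw [ha]; linarith
  have hb0 : (1-a)/2 ≥ 0 := by linarith
  have hsq_a : a^2 + ((1-a)/2)^2 + ((1-a)/2)^2 = γ := by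
    rw [ha]; linear_combination (3/2) * hs2
  refine ⟨⟨hab, hb0, by ring, hsq_a⟩, ?_⟩
  intro x₁ x₂ x₃ h12 h23 h30 hsum hsq
  have hx13 : (1:ℝ)/3 ≤ x₁ := by linarith
  have hDx₁ : Dq γ x₁ = (x₂ - x₃)^2 := by
    unfold Dq; linear_combination (-2)*hsq + (x₂+x₃+1-x₁)*hsum
  have hDx₁' : 2*γ - 1 + 2*x₁ - 3*x₁^2 = (x₂ - x₃)^2 := hDx₁
  have hx1a : x₁ ≤ a := by
    have h1 : (x₁ - 1/3)^2 ≤ s^2 := by nlinarith [sq_nonneg (x₂ - x₃), hDx₁', hs2]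
    rw [ha]
    by_contra hc
    push_neg at hc
    nlinarith [h1, mul_pos (show (0:ℝ) < x₁ - 1/3 - s by linarith)
      (show (0:ℝ) < x₁ - 1/3 + s by linarith)]
  have hsqx₁ : Real.sqrt (Dq γ x₁) = x₂ - x₃ := by
    rw [hDx₁]; exact Real.sqrt_sq (by linarith)
  have hqx₁ : qf γ x₁ = x₂ := by unfold qf; rw [hsqx₁]; linarith
  have hrx₁ : rf γ x₁ = x₃ := by unfold rf; rw [hsqx₁]; linarith
  have hDa : Dq γ a = 0 := by
    unfold Dq; rw [ha]; linear_combination (-3) * hs2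
  have hqa : qf γ a = (1-a)/2 := by unfold qf; rw [hDa, Real.sqrt_zero]; ring
  have hra : rf γ a = (1-a)/2 := by unfold rf; rw [hDa, Real.sqrt_zero]; ring
  rcases eq_or_lt_of_le hx1a with heq | hlt
  · -- boundary case : the triple is already the maximizer
    have h0 : (x₂ - x₃)^2 = 0 := by rw [← hDx₁, heq, hDa]
    have h23eq : x₂ = x₃ := by
      have h0' : x₂ - x₃ = 0 := by
        have := pow_eq_zero_iff (n := 2) (by norm_num) |>.mp h0
        exact this
      linarith
    have hx2 : x₂ = (1-a)/2 := by linarith [hsum, h23eq, heq]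
    have hx3 : x₃ = (1-a)/2 := by linarith
    rw [heq, hx2, hx3]
  · -- main case : move along the constraint curve
    have hspos : 0 < s := by rw [ha] at hlt; linarith
    have h3 : Real.sqrt (Dq γ x₁) ≤ 3*x₁ - 1 := by rw [hsqx₁]; linarith
    have hr0 : 0 ≤ rf γ x₁ := by rw [hrx₁]; linarith
    have hDx₁0 : 0 ≤ Dq γ x₁ := by rw [hDx₁]; positivity
    have hmain := Ff_mono γ x₁ s hx13 hs2 (by rw [ha] at hlt; exact hlt) hDx₁0 h3 hr0
    rw [← ha] at hmain
    unfold Ff at hmain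
    rw [hqx₁, hrx₁, hqa, hra] at hmain
    exact hmain
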